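/- Let H be an n×n complex Hermitian matrix and let λ be an eigenvalue of H of algebraic multiplicity s ≥ 1. Then there exists an orthonormal family u : Fin s → (Fin n → ℂ) (i.e. ∑_i conj(u k i)·(u l i) = 1 if k = l and 0 otherwise) with H.mulVec (u k) = λ • (u k) for each k, such that D_s(λ·1 − H) = c • ∑_{k} vecMulVec (u k) (star (u k)), where c = ∏_{μ} (λ − μ), the product running over the multiset of roots of the characteristic polynomial of H different from λ (counted with multiplicity; there are n − s of them). In particular D_s(λ·1 − H) has rank exactly s, and its columns span the λ-eigenspace of H. -/

import Mathlib

open scoped ComplexConjugate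

/-- The reduced order-one complement of order `s` of an `n×n` matrix `A`:
the matrix whose `(i,j)` entry is the coefficient of `z^(n-s)` in the `(i,j)` entry
of `adjugate (1 + z • A)`, computed over the polynomial ring `R[z]`. -/
noncomputable def redComp {R : Type*} [CommRing R] {n : ℕ} (s : ℕ)
    (A : Matrix (Fin n) (Fin n) R) : Matrix (Fin n) (Fin n) R :=
  Matrix.of fun i j =>
    (((1 + (Polynomial.X : Polynomial R) • A.map (fun a => Polynomial.C a) :
        Matrix (Fin n) (Fin n) (Polynomial R)).adjugate) i j).coeff (n - s)


open Matrix Polynomial Finset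

section aux

lemma adjugate_conj_helper {n : Type*} [Fintype n] [DecidableEq n] {R : Type*} [CommRing R]
    (P Q A : Matrix n n R) (hPQ : P * Q = 1) (hQP : Q * P = 1) :
    (P * A * Q).adjugate = P * A.adjugate * Q := by
  have hdet : Q.det * P.det = 1 := by rw [← det_mul, hQP, det_one]
  have hP : adjugate P = P.det • Q := by
    calc adjugate P = Q * (P * adjugate P) := by rw [← mul_assoc, hQP, one_mul]
    _ = Q * (P.det • 1) := by rw [mul_adjugate]
    _ = P.det • Q := by rw [mul_smul_comm, mul_one]
  have hQ : adjugate Q = Q.det • P := by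
    calc adjugate Q = P * (Q * adjugate Q) := by rw [← mul_assoc, hPQ, one_mul]
    _ = P * (Q.det • 1) := by rw [mul_adjugate]
    _ = Q.det • P := by rw [mul_smul_comm, mul_one]
  rw [adjugate_mul_distrib, adjugate_mul_distrib, hP, hQ]
  simp only [Matrix.smul_mul, Matrix.mul_smul, smul_smul, mul_comm P.det Q.det, hdet, one_smul, Matrix.mul_assoc]

lemma coeff_prod_card {ι : Type*} (T : Finset ι) (a : ι → ℂ) (ha : ∀ j ∈ T, a j ≠ 0) :
    (∏ j ∈ T, (1 + C (a j) * X)).coeff T.card = ∏ j ∈ T, a j := by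
  have hform : ∀ j, (1 : ℂ[X]) + C (a j) * X = C (a j) * X + C 1 := by
    intro j; rw [Polynomial.C_1]; ring
  have hne : ∀ j ∈ T, (1 : ℂ[X]) + C (a j) * X ≠ 0 := by
    intro j hj
    intro h
    have h0 := congrArg (fun p => Polynomial.coeff p 0) h
    simp at h0
  have hdeg : (∏ j ∈ T, (1 + C (a j) * X)).natDegree = T.card := by
    rw [natDegree_prod _ _ hne,
      Finset.sum_congr rfl (fun j hj => by rw [hform, natDegree_linear (ha j hj)])]
    simp
  have hlc := leadingCoeff_prod T (fun j => 1 + C (a j) * X)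
  rw [Polynomial.leadingCoeff, hdeg] at hlc
  rw [hlc]
  exact Finset.prod_congr rfl fun j hj => by rw [hform, leadingCoeff_linear (ha j hj)]

lemma coeff_prod_lt {ι : Type*} (T : Finset ι) (a : ι → ℂ) {m : ℕ} (hm : T.card < m) :
    (∏ j ∈ T, (1 + C (a j) * X)).coeff m = 0 := by
  apply coeff_eq_zero_of_natDegree_lt
  have h1 : (∏ j ∈ T, (1 + C (a j) * X)).natDegree ≤ ∑ j ∈ T, ((1 : ℂ[X]) + C (a j) * X).natDegree :=
    natDegree_prod_le _ _
  have h2 : ∑ j ∈ T, ((1 : ℂ[X]) + C (a j) * X).natDegree ≤ T.card := by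
    have : ∀ j ∈ T, ((1 : ℂ[X]) + C (a j) * X).natDegree ≤ 1 := by
      intro j _
      have e : (1 : ℂ[X]) + C (a j) * X = C (a j) * X + C 1 := by rw [Polynomial.C_1]; ring
      rw [e]
      exact Polynomial.natDegree_linear_le
    calc ∑ j ∈ T, ((1 : ℂ[X]) + C (a j) * X).natDegree
        ≤ ∑ _j ∈ T, 1 := Finset.sum_le_sum (f := fun j => ((1 : ℂ[X]) + C (a j) * X).natDegree) this
      _ = T.card := by simp
  omega
end aux

/-- Let `H` be an `n×n` complex Hermitian matrix and `λ` an eigenvalue of `H` of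
algebraic multiplicity `s ≥ 1`.  Then there is an orthonormal family
`u : Fin s → (Fin n → ℂ)` of eigenvectors of `H` for `λ` such that
`redComp s (λ•1 - H) = c • ∑ k, vecMulVec (u k) (star (u k))`, where
`c = ∏ (λ - μ)` over the multiset of roots `μ ≠ λ` of the characteristic polynomial
(counted with multiplicity).  In particular `redComp s (λ•1 - H)` has rank exactly
`s` and its columns span the `λ`-eigenspace of `H`. -/
theorem redComp_charmatrix_spectral_form {n : ℕ} (H : Matrix (Fin n) (Fin n) ℂ)
    (hH : H.IsHermitian) (lam : ℂ) (s : ℕ) (hs : 1 ≤ s)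
    (hmul : Polynomial.rootMultiplicity lam (Matrix.charpoly H) = s) :
    (∃ u : Fin s → (Fin n → ℂ),
        (∀ k l : Fin s, (∑ i, conj (u k i) * u l i) = if k = l then 1 else 0) ∧
        (∀ k : Fin s, H.mulVec (u k) = lam • u k) ∧
        redComp s (lam • (1 : Matrix (Fin n) (Fin n) ℂ) - H)
          = ((((Matrix.charpoly H).roots.filter (fun μ => μ ≠ lam)).map
              (fun μ => lam - μ)).prod)
            • ∑ k : Fin s, Matrix.vecMulVec (u k) (star (u k))) ∧
      (redComp s (lam • (1 : Matrix (Fin n) (Fin n) ℂ) - H)).rank = s ∧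
      Submodule.span ℂ
          (Set.range fun j : Fin n =>
            (fun i => redComp s (lam • (1 : Matrix (Fin n) (Fin n) ℂ) - H) i j))
        = Module.End.eigenspace (Matrix.mulVecLin H) lam := by
  classical
  set U : Matrix (Fin n) (Fin n) ℂ := (hH.eigenvectorUnitary : Matrix (Fin n) (Fin n) ℂ) with hUdef
  set d : Fin n → ℂ := fun i => ((hH.eigenvalues i : ℝ) : ℂ) with hddef
  have hU1 : U * star U = 1 := (Matrix.mem_unitaryGroup_iff).mp hH.eigenvectorUnitary.2
  have hU2 : star U * U = 1 := (Matrix.mem_unitaryGroup_iff').mp hH.eigenvectorUnitary.2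
  have hspec : H = U * Matrix.diagonal d * star U := by
    have := hH.spectral_theorem
    convert this using 2
    rw [Unitary.conjStarAlgAut_apply]; rfl
  -- the matrix lam • 1 - H
  have hdiag_lam : lam • (1 : Matrix (Fin n) (Fin n) ℂ) - Matrix.diagonal d
      = Matrix.diagonal (fun i => lam - d i) := by
    ext i j
    by_cases h : i = j <;> simp [h, Matrix.diagonal_apply, Matrix.one_apply]
  have hA : lam • (1 : Matrix (Fin n) (Fin n) ℂ) - H
      = U * Matrix.diagonal (fun i => lam - d i) * star U := by
    have h1 : U * (lam • (1 : Matrix (Fin n) (Fin n) ℂ)) * star U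
        = lam • (1 : Matrix (Fin n) (Fin n) ℂ) := by
      rw [Matrix.mul_smul, Matrix.smul_mul, mul_one, hU1]
    calc lam • (1 : Matrix (Fin n) (Fin n) ℂ) - H
        = U * (lam • (1 : Matrix (Fin n) (Fin n) ℂ)) * star U - U * Matrix.diagonal d * star U := by
          rw [h1, ← hspec]
      _ = U * ((lam • (1 : Matrix (Fin n) (Fin n) ℂ)) - Matrix.diagonal d) * star U := by
          rw [Matrix.mul_sub, Matrix.sub_mul]
      _ = U * Matrix.diagonal (fun i => lam - d i) * star U := by rw [hdiag_lam]
  -- characteristic polynomial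
  set Um : Matrix (Fin n) (Fin n) ℂ[X] := U.map (fun a => C a) with hUmdef
  set Usm : Matrix (Fin n) (Fin n) ℂ[X] := (star U).map (fun a => C a) with hUsmdef
  have hmapCmul : ∀ A B : Matrix (Fin n) (Fin n) ℂ,
      (A * B).map (fun a => (C a : ℂ[X])) = A.map (fun a => C a) * B.map (fun a => C a) := by
    intro A B
    exact Matrix.map_mul (f := (C : ℂ →+* ℂ[X]))
  have hmapC1 : ((1 : Matrix (Fin n) (Fin n) ℂ).map (fun a => (C a : ℂ[X]))) = 1 :=
    Matrix.map_one _ (map_zero C) (map_one C)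
  have hUm1 : Um * Usm = 1 := by rw [hUmdef, hUsmdef, ← hmapCmul, hU1, hmapC1]
  have hUm2 : Usm * Um = 1 := by rw [hUmdef, hUsmdef, ← hmapCmul, hU2, hmapC1]
  have hchar : H.charpoly = ∏ i, (X - C (d i)) := by
    have hsc : (Matrix.scalar (Fin n) (X : ℂ[X])) = Um * Matrix.scalar (Fin n) X * Usm := by
      rw [mul_assoc, (Matrix.scalar_commute (X : ℂ[X]) (fun r => Commute.all _ _) Usm).eq,
        ← mul_assoc, hUm1, one_mul]
    have hm : charmatrix H = Um * Matrix.diagonal (fun i => (X : ℂ[X]) - C (d i)) * Usm := by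
      have hHC : H.map (fun a => (C a : ℂ[X]))
          = Um * (Matrix.diagonal d).map (fun a => (C a : ℂ[X])) * Usm := by
        rw [hUmdef, hUsmdef, ← hmapCmul, ← hmapCmul]
        exact congrArg (fun M => M.map fun a => (C a : ℂ[X])) hspec
      have : charmatrix H = Matrix.scalar (Fin n) X - H.map (fun a => (C a : ℂ[X])) := rfl
      rw [this, hHC, hsc, ← Matrix.sub_mul, ← Matrix.mul_sub,
        Matrix.diagonal_map (f := fun a => (C a : ℂ[X])) (map_zero C)]
      congr 2
      ext i j
      by_cases h : i = j <;> simp [h, Matrix.diagonal_apply, Matrix.scalar_apply]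
    have hdet1 : Um.det * Usm.det = 1 := by rw [← det_mul, hUm1, det_one]
    rw [Matrix.charpoly, hm, det_mul, det_mul, det_diagonal]
    rw [mul_comm Um.det _, mul_assoc, hdet1, mul_one]
  have hroots : H.charpoly.roots = Finset.univ.val.map d := by
    have h2 : ∏ i, ((X : ℂ[X]) - C (d i))
        = (Multiset.map (fun a => X - C a) (Finset.univ.val.map d)).prod := by
      rw [Multiset.map_map]; rfl
    rw [hchar, h2, roots_multiset_prod_X_sub_C]
  have hcount : (Finset.univ.filter (fun i => d i = lam)).card = s := by
    have h1 := count_roots (a := lam) H.charpoly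
    rw [hroots, Multiset.count_map, hmul] at h1
    rw [← h1]
    have : (Finset.univ.filter (fun i => d i = lam)).card
        = Multiset.card (Multiset.filter (fun i => d i = lam) Finset.univ.val) := by
      rw [Finset.card, Finset.filter_val]
    rw [this]
    congr 1
    exact Multiset.filter_congr (fun x _ => by exact eq_comm)
  have hsle : s ≤ n := by
    rw [← hcount]
    exact le_trans (Finset.card_filter_le _ _) (by simp)
  set T : Finset (Fin n) := Finset.univ.filter (fun j => d j ≠ lam) with hTdef
  set S : Finset (Fin n) := Finset.univ.filter (fun i => d i = lam) with hSdef
  have hcardT : T.card = n - s := by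
    have h := Finset.card_filter_add_card_filter_not
      (s := (Finset.univ : Finset (Fin n))) (p := fun i => d i = lam)
    have h2 : Finset.univ.filter (fun i => ¬ d i = lam) = T :=
      Finset.filter_congr (fun x _ => Iff.rfl)
    rw [h2, hcount] at h
    simp only [Finset.card_univ, Fintype.card_fin] at h
    omega
  set c : ℂ := ∏ j ∈ T, (lam - d j) with hcdef
  have hc0 : c ≠ 0 := by
    rw [hcdef]
    apply Finset.prod_ne_zero_iff.mpr
    intro j hj
    exact sub_ne_zero.mpr (Ne.symm (Finset.mem_filter.mp hj).2)
  have hcardsub : Fintype.card {i // d i = lam} = s := by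
    rw [Fintype.card_subtype]; exact hcount
  set e : Fin s ≃ {i // d i = lam} := (Fintype.equivFinOfCardEq hcardsub).symm with hedef
  set u : Fin s → Fin n → ℂ := fun k i => U i (e k) with hudef
  have hON : ∀ k l : Fin s, (∑ i, conj (u k i) * u l i) = if k = l then 1 else 0 := by
    intro k l
    have h := congrFun (congrFun hU2 ((e k : Fin n))) ((e l : Fin n))
    have hL : (star U * U) (e k : Fin n) (e l : Fin n) = ∑ i, conj (u k i) * u l i := by
      rw [Matrix.mul_apply]
      apply Finset.sum_congr rfl
      intro i _
      rw [Matrix.star_apply]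
      rfl
    rw [hL] at h
    rw [h, Matrix.one_apply]
    by_cases hkl : k = l
    · simp [hkl]
    · have hne : (e k : Fin n) ≠ (e l : Fin n) := fun hekl => hkl (e.injective (Subtype.ext hekl))
      simp [hkl, hne]
  have heig : ∀ k : Fin s, H *ᵥ u k = lam • u k := by
    intro k
    have hu : u k = (hH.eigenvectorBasis (e k : Fin n)).ofLp := by
      funext i; exact hH.eigenvectorUnitary_apply i (e k : Fin n)
    rw [hu, hH.mulVec_eigenvectorBasis (e k : Fin n),
      RCLike.real_smul_eq_coe_smul (K := ℂ)]
    congr 1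
    exact (e k).2
  have hkey : ∀ k, (∏ j ∈ Finset.univ.erase k, ((1:ℂ[X]) + C (lam - d j) * X)).coeff (n - s)
      = if d k = lam then c else 0 := by
    intro k
    by_cases hk : d k = lam
    · rw [if_pos hk]
      have hTsub : T ⊆ Finset.univ.erase k := by
        intro j hj
        exact Finset.mem_erase.mpr ⟨fun h => (Finset.mem_filter.mp hj).2 (h ▸ hk), Finset.mem_univ j⟩
      have hprod : ∏ j ∈ Finset.univ.erase k, ((1:ℂ[X]) + C (lam - d j) * X)
          = ∏ j ∈ T, ((1:ℂ[X]) + C (lam - d j) * X) := by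
        symm
        apply Finset.prod_subset hTsub
        intro x _ hnx
        have hx : d x = lam := by
          by_contra h
          exact hnx (Finset.mem_filter.mpr ⟨Finset.mem_univ x, h⟩)
        simp [hx]
      rw [hprod, ← hcardT]
      exact coeff_prod_card T _ (fun j hj => sub_ne_zero.mpr (Ne.symm (Finset.mem_filter.mp hj).2))
    · rw [if_neg hk]
      have hkT : k ∈ T := Finset.mem_filter.mpr ⟨Finset.mem_univ k, hk⟩
      have hsub : T.erase k ⊆ Finset.univ.erase k := by
        intro j hj
        exact Finset.mem_erase.mpr ⟨(Finset.mem_erase.mp hj).1, Finset.mem_univ j⟩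
      have hprod : ∏ j ∈ Finset.univ.erase k, ((1:ℂ[X]) + C (lam - d j) * X)
          = ∏ j ∈ T.erase k, ((1:ℂ[X]) + C (lam - d j) * X) := by
        symm
        apply Finset.prod_subset hsub
        intro x hx hnx
        have hxk : x ≠ k := (Finset.mem_erase.mp hx).1
        have hxl : d x = lam := by
          by_contra h
          exact hnx (Finset.mem_erase.mpr ⟨hxk, Finset.mem_filter.mpr ⟨Finset.mem_univ x, h⟩⟩)
        simp [hxl]
      rw [hprod]
      apply coeff_prod_lt
      have hpos : 0 < T.card := Finset.card_pos.mpr ⟨k, hkT⟩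
      rw [Finset.card_erase_of_mem hkT]
      omega
  have hmap : (1 : Matrix (Fin n) (Fin n) ℂ[X])
      + (X : ℂ[X]) • (lam • (1 : Matrix (Fin n) (Fin n) ℂ) - H).map (fun a => C a)
      = Um * Matrix.diagonal (fun i => 1 + C (lam - d i) * X) * Usm := by
    have h1 : Matrix.diagonal (fun i => (1:ℂ[X]) + C (lam - d i) * X)
        = 1 + (X:ℂ[X]) • (Matrix.diagonal (fun i => lam - d i)).map (fun a => (C a:ℂ[X])) := by
      rw [Matrix.diagonal_map (f := fun a => (C a : ℂ[X])) (map_zero C)]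
      ext i j
      by_cases h : i = j <;> simp [h, Matrix.diagonal_apply, Matrix.one_apply, mul_comm]
    rw [h1, Matrix.mul_add, Matrix.add_mul, mul_one, hUm1, Matrix.mul_smul, Matrix.smul_mul]
    congr 1
    rw [hA, hmapCmul, hmapCmul]
  have hadj : ((1 : Matrix (Fin n) (Fin n) ℂ[X])
        + (X : ℂ[X]) • (lam • (1 : Matrix (Fin n) (Fin n) ℂ) - H).map (fun a => C a)).adjugate
      = Um * Matrix.diagonal
          (fun i => ∏ j ∈ Finset.univ.erase i, ((1:ℂ[X]) + C (lam - d j) * X)) * Usm := by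
    rw [hmap, adjugate_conj_helper _ _ _ hUm1 hUm2, adjugate_diagonal]
  have hentry : ∀ i j, redComp s (lam • (1 : Matrix (Fin n) (Fin n) ℂ) - H) i j
      = ∑ k ∈ S, c * (U i k * conj (U j k)) := by
    intro i j
    have h0 : redComp s (lam • (1 : Matrix (Fin n) (Fin n) ℂ) - H) i j
        = ((((1 : Matrix (Fin n) (Fin n) ℂ[X])
            + (X:ℂ[X]) • (lam • (1 : Matrix (Fin n) (Fin n) ℂ) - H).map
              (fun a => C a)).adjugate) i j).coeff (n - s) := rfl
    rw [h0, hadj]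
    have h1 : ((Um * Matrix.diagonal
          (fun i' => ∏ j' ∈ Finset.univ.erase i', ((1:ℂ[X]) + C (lam - d j') * X)) * Usm :
          Matrix (Fin n) (Fin n) ℂ[X])) i j
        = ∑ k, C (U i k) * (∏ j' ∈ Finset.univ.erase k, ((1:ℂ[X]) + C (lam - d j') * X))
            * C (conj (U j k)) := by
      rw [Matrix.mul_apply]
      apply Finset.sum_congr rfl
      intro k _
      rw [Matrix.mul_diagonal]
      simp [hUmdef, hUsmdef, Matrix.map_apply, Matrix.star_apply, RCLike.star_def]
    rw [h1, Polynomial.finset_sum_coeff]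
    have h2 : ∀ k, (C (U i k) * (∏ j' ∈ Finset.univ.erase k, ((1:ℂ[X]) + C (lam - d j') * X))
          * C (conj (U j k))).coeff (n - s)
        = (U i k * conj (U j k)) * (if d k = lam then c else 0) := by
      intro k
      rw [mul_comm _ (C (conj (U j k))), ← mul_assoc, ← Polynomial.C_mul, coeff_C_mul, hkey k]
      ring
    rw [Finset.sum_congr rfl (fun k _ => h2 k), hSdef, Finset.sum_filter]
    apply Finset.sum_congr rfl
    intro k _
    by_cases hk : d k = lam <;> simp [hk, mul_comm]
  have hcprime : (((H.charpoly).roots.filter (fun μ => μ ≠ lam)).map (fun μ => lam - μ)).prod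
      = c := by
    rw [hroots, Multiset.filter_map, Multiset.map_map]
    rw [hcdef]
    have hTv : T.val = Multiset.filter (fun j => d j ≠ lam) Finset.univ.val := by
      rw [hTdef, Finset.filter_val]
    rw [Finset.prod, hTv]
    congr 1
  have hsub_sum : ∀ {M : Type} [AddCommMonoid M] (f : Fin n → M),
      ∑ k : Fin s, f (e k : Fin n) = ∑ x ∈ S, f x := by
    intro M _ f
    rw [Finset.sum_subtype (p := fun i => d i = lam) S
      (fun x => by simp [hSdef, Finset.mem_filter]) f]
    exact Equiv.sum_comp e (fun x => f (x : Fin n))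
  have heq : redComp s (lam • (1 : Matrix (Fin n) (Fin n) ℂ) - H)
      = c • ∑ k : Fin s, vecMulVec (u k) (star (u k)) := by
    ext i j
    rw [hentry i j]
    have hrhs : (c • ∑ k : Fin s, vecMulVec (u k) (star (u k))) i j
        = ∑ k : Fin s, c * (u k i * conj (u k j)) := by
      simp [Matrix.sum_apply, vecMulVec_apply, Finset.mul_sum, Pi.star_apply, RCLike.star_def]
    rw [hrhs]
    exact (hsub_sum (fun x => c * (U i x * conj (U j x)))).symm
  set N : Matrix (Fin n) (Fin n) ℂ := redComp s (lam • (1 : Matrix (Fin n) (Fin n) ℂ) - H)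
    with hNdef
  have hNentry : ∀ i j, N i j = c * ∑ k : Fin s, u k i * conj (u k j) := by
    intro i j
    rw [heq]
    simp [Matrix.sum_apply, vecMulVec_apply, Finset.mul_sum, Pi.star_apply, RCLike.star_def]
  have hcol : ∀ j, (fun i => N i j) = ∑ k : Fin s, (c * conj (u k j)) • u k := by
    intro j
    funext i
    show N i j = _
    rw [hNentry i j, Finset.sum_apply, Finset.mul_sum]
    apply Finset.sum_congr rfl
    intro k _
    simp only [Pi.smul_apply, smul_eq_mul]
    ring
  have humem : ∀ k, u k ∈ Module.End.eigenspace (Matrix.mulVecLin H) lam := by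
    intro k
    apply Module.End.mem_eigenspace_iff.mpr
    rw [Matrix.mulVecLin_apply]
    exact heig k
  have hcolE : ∀ j, (fun i => N i j) ∈ Module.End.eigenspace (Matrix.mulVecLin H) lam := by
    intro j
    rw [hcol j]
    exact Submodule.sum_mem _ (fun k _ => Submodule.smul_mem _ _ (humem k))
  have hNmulvec : ∀ x : Fin n → ℂ,
      N *ᵥ x ∈ Submodule.span ℂ (Set.range (fun j : Fin n => (fun i => N i j))) := by
    intro x
    have hx : N *ᵥ x = ∑ j : Fin n, x j • (fun i => N i j) := by
      funext i
      rw [Finset.sum_apply]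
      simp [Matrix.mulVec, dotProduct, mul_comm]
    rw [hx]
    exact Submodule.sum_mem _ fun j _ =>
      Submodule.smul_mem _ _ (Submodule.subset_span ⟨j, rfl⟩)
  have hNu : ∀ l, N *ᵥ u l = c • u l := by
    intro l
    funext i
    show ∑ j, N i j * u l j = c * u l i
    calc ∑ j, N i j * u l j
        = ∑ j, (c * ∑ k : Fin s, u k i * conj (u k j)) * u l j :=
          Finset.sum_congr rfl (fun j _ => by rw [hNentry i j])
      _ = ∑ k : Fin s, c * (u k i * ∑ j, conj (u k j) * u l j) := by
          simp only [Finset.sum_mul, Finset.mul_sum]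
          rw [Finset.sum_comm]
          exact Finset.sum_congr rfl fun k _ => Finset.sum_congr rfl fun j _ => by ring
      _ = ∑ k : Fin s, c * (u k i * if k = l then 1 else 0) := by
          exact Finset.sum_congr rfl fun k _ => by rw [hON k l]
      _ = c * u l i := by simp
  have huspan : ∀ l, u l ∈ Submodule.span ℂ (Set.range (fun j : Fin n => (fun i => N i j))) := by
    intro l
    have h := hNmulvec (u l)
    rw [hNu l] at h
    have h2 : u l = c⁻¹ • (c • u l) := by
      rw [smul_smul, inv_mul_cancel₀ hc0, one_smul]
    rw [h2]
    exact Submodule.smul_mem _ _ h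
  have hE_le : Module.End.eigenspace (Matrix.mulVecLin H) lam
      ≤ Submodule.span ℂ (Set.range u) := by
    intro v hv
    have hv' : H *ᵥ v = lam • v := by
      rw [← Matrix.mulVecLin_apply]
      exact Module.End.mem_eigenspace_iff.mp hv
    set w : Fin n → ℂ := star U *ᵥ v with hwdef
    have hvw : v = U *ᵥ w := by
      rw [hwdef, Matrix.mulVec_mulVec, hU1, Matrix.one_mulVec]
    have hDw : Matrix.diagonal d *ᵥ w = lam • w := by
      have h1 : H *ᵥ v = U *ᵥ (Matrix.diagonal d *ᵥ w) := by
        rw [hspec, ← Matrix.mulVec_mulVec, ← Matrix.mulVec_mulVec]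
      have h2 : lam • v = U *ᵥ (lam • w) := by
        rw [Matrix.mulVec_smul, ← hvw]
      have h3 : U *ᵥ (Matrix.diagonal d *ᵥ w) = U *ᵥ (lam • w) := by
        rw [← h1, hv', h2]
      have h4 : star U *ᵥ (U *ᵥ (Matrix.diagonal d *ᵥ w)) = star U *ᵥ (U *ᵥ (lam • w)) := by
        rw [h3]
      simp only [Matrix.mulVec_mulVec, ← Matrix.mul_assoc, hU2, Matrix.one_mul,
        Matrix.one_mulVec] at h4
      exact h4
    have hw0 : ∀ i, d i ≠ lam → w i = 0 := by
      intro i hi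
      have h5 := congrFun hDw i
      rw [Matrix.mulVec_diagonal] at h5
      have h6 : (d i - lam) * w i = 0 := by
        rw [sub_mul, h5]
        show lam * w i - lam • w i = 0
        simp [smul_eq_mul]
      rcases mul_eq_zero.mp h6 with h | h
      · exact absurd (sub_eq_zero.mp h) hi
      · exact h
    have hvsum : v = ∑ k : Fin s, w (e k : Fin n) • u k := by
      have h6 : v = ∑ j ∈ S, w j • ((fun i => U i j) : Fin n → ℂ) := by
        funext i
        rw [hvw, Finset.sum_apply]
        show ∑ j, U i j * w j = _
        rw [← Finset.sum_subset (Finset.subset_univ S) (fun x _ hx => by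
          have : d x ≠ lam := fun h => hx (Finset.mem_filter.mpr ⟨Finset.mem_univ x, h⟩)
          rw [hw0 x this, mul_zero])]
        exact Finset.sum_congr rfl fun j _ => by simp [mul_comm]
      rw [h6, ← hsub_sum (fun j => w j • (fun i => U i j))]
    rw [hvsum]
    exact Submodule.sum_mem _ fun k _ =>
      Submodule.smul_mem _ _ (Submodule.subset_span ⟨k, rfl⟩)
  have hspan_eq : Submodule.span ℂ (Set.range (fun j : Fin n => (fun i => N i j)))
      = Module.End.eigenspace (Matrix.mulVecLin H) lam := by
    apply le_antisymm
    · rw [Submodule.span_le]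
      rintro _ ⟨j, rfl⟩
      exact hcolE j
    · exact le_trans hE_le (Submodule.span_le.mpr (by rintro _ ⟨l, rfl⟩; exact huspan l))
  have hLI : LinearIndependent ℂ u := by
    rw [Fintype.linearIndependent_iff]
    intro g hg l
    have h := congrArg (fun v : Fin n → ℂ => ∑ i, conj (u l i) * v i) hg
    have hzero : ∑ i, conj (u l i) * (0 : Fin n → ℂ) i = 0 := by simp
    rw [hzero] at h
    have hlhs : ∑ i, conj (u l i) * (∑ k : Fin s, g k • u k) i = g l := by
      calc ∑ i, conj (u l i) * (∑ k : Fin s, g k • u k) i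
          = ∑ i, ∑ k : Fin s, g k * (conj (u l i) * u k i) := by
            apply Finset.sum_congr rfl
            intro i _
            rw [Finset.sum_apply, Finset.mul_sum]
            exact Finset.sum_congr rfl fun k _ => by simp only [Pi.smul_apply, smul_eq_mul]; ring
        _ = ∑ k : Fin s, g k * ∑ i, conj (u l i) * u k i := by
            rw [Finset.sum_comm]
            exact Finset.sum_congr rfl fun k _ => by rw [Finset.mul_sum]
        _ = ∑ k : Fin s, g k * if l = k then 1 else 0 := by
            exact Finset.sum_congr rfl fun k _ => by rw [hON l k]
        _ = g l := by simp
    rw [hlhs] at h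
    exact h
  have hspanu_cols : Submodule.span ℂ (Set.range u)
      = Submodule.span ℂ (Set.range (fun j : Fin n => (fun i => N i j))) := by
    apply le_antisymm
    · exact Submodule.span_le.mpr (by rintro _ ⟨l, rfl⟩; exact huspan l)
    · apply Submodule.span_le.mpr
      rintro _ ⟨j, rfl⟩
      have : (fun i => N i j) ∈ Submodule.span ℂ (Set.range u) := by
        rw [hcol j]
        exact Submodule.sum_mem _ fun k _ =>
          Submodule.smul_mem _ _ (Submodule.subset_span ⟨k, rfl⟩)
      exact this
  have hrank : N.rank = s := by
    rw [Matrix.rank_eq_finrank_span_cols]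
    have hT2 : Set.range N.col = Set.range (fun j : Fin n => (fun i => N i j)) := rfl
    rw [hT2, ← hspanu_cols, finrank_span_eq_card hLI, Fintype.card_fin]
  exact ⟨⟨u, hON, heig, by rw [hcprime]; exact heq⟩, hrank, hspan_eq⟩
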